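/- The standard system of cofinal sequences s_st on the ordinals below ω^ω has the Bachmann property: for all nonzero limit ordinals β, δ < ω^ω and every natural number n, if s_st(β, n) < δ ≤ s_st(β, n+1) then s_st(β, n) ≤ s_st(δ, 0). -/

import Mathlib

open Ordinal
open scoped Classical

/-- The standard system of cofinal sequences on the ordinals below `ω^ω`:
if `β = ω^(m+1) * (γ+1)` (such a representation exists and is unique for every
nonzero limit ordinal `β < ω^ω`) then `s_st(β, n) = ω^(m+1)*γ + ω^m*n`;
on ordinals without such a representation the value is irrelevant (set to `0`). -/
noncomputable def sst (β : Ordinal) (n : ℕ) : Ordinal :=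
  if h : ∃ p : ℕ × Ordinal, β = omega0 ^ ((p.1 : Ordinal) + 1) * (p.2 + 1) then
    omega0 ^ ((h.choose.1 : Ordinal) + 1) * h.choose.2 +
      omega0 ^ (h.choose.1 : Ordinal) * n
  else 0

lemma not_omega0_dvd_succ (γ : Ordinal) : ¬ omega0 ∣ (γ + 1) := by
  intro h
  have hne : γ + 1 ≠ 0 := by
    rw [Ordinal.add_one_eq_succ]; exact Ordinal.succ_ne_zero γ
  have hlim : Order.IsSuccLimit (γ + 1) := isSuccLimit_iff_omega0_dvd.2 ⟨hne, h⟩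
  rw [Ordinal.add_one_eq_succ] at hlim
  exact Order.not_isSuccLimit_succ γ hlim

lemma rep_lt_absurd {m k : ℕ} {γ ρ : Ordinal} (hmk : m < k)
    (h : omega0 ^ ((m:Ordinal)+1) * (γ+1) = omega0 ^ ((k:Ordinal)+1) * (ρ+1)) : False := by
  have hdvd : omega0 ^ ((m:Ordinal)+2) ∣ omega0 ^ ((k:Ordinal)+1) := by
    apply opow_dvd_opow
    have hle : (m:Ordinal) + 1 ≤ (k:Ordinal) := by
      have h' : ((m+1 : ℕ) : Ordinal) ≤ (k : Ordinal) := Nat.cast_le.2 (by omega)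
      push_cast at h'; exact h'
    calc (m:Ordinal)+2 = ((m:Ordinal)+1)+1 := by rw [add_assoc, one_add_one_eq_two]
      _ ≤ (k:Ordinal)+1 := add_le_add_left hle 1
  have hdvd2 : omega0 ^ ((m:Ordinal)+2) ∣ omega0 ^ ((m:Ordinal)+1) * (γ+1) := by
    rw [h]; exact hdvd.mul_right _
  obtain ⟨e, he⟩ := hdvd2
  have hexp : omega0 ^ ((m:Ordinal)+2) = omega0 ^ ((m:Ordinal)+1) * omega0 := by
    rw [show (m:Ordinal)+2 = ((m:Ordinal)+1)+1 by rw [add_assoc, one_add_one_eq_two], opow_add,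
      opow_one]
  rw [hexp, mul_assoc] at he
  have : γ + 1 = omega0 * e :=
    (mul_right_inj' (opow_pos _ omega0_pos).ne').1 he
  exact not_omega0_dvd_succ γ ⟨e, this⟩

lemma rep_uniq {m k : ℕ} {γ ρ : Ordinal}
    (h : omega0 ^ ((m:Ordinal)+1) * (γ+1) = omega0 ^ ((k:Ordinal)+1) * (ρ+1)) :
    m = k ∧ γ = ρ := by
  have hmk : m = k := by
    rcases lt_trichotomy m k with hlt | heq | hgt
    · exact absurd (rep_lt_absurd hlt h) (by simp)
    · exact heq
    · exact absurd (rep_lt_absurd hgt h.symm) (by simp)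
  subst hmk
  refine ⟨rfl, ?_⟩
  have heq := (mul_right_inj' (opow_pos _ omega0_pos).ne').1 h
  have hle1 := heq.le
  have hle2 := heq.ge
  rw [Ordinal.add_one_eq_succ, Ordinal.add_one_eq_succ, Order.succ_le_succ_iff] at hle1 hle2
  exact hle1.antisymm hle2

lemma rep_exists {δ : Ordinal} (hδ : δ < omega0 ^ omega0) (hlim : Order.IsSuccLimit δ) :
    ∃ m : ℕ, ∃ γ : Ordinal, δ = omega0 ^ ((m:Ordinal)+1) * (γ+1) := by
  obtain ⟨hne, hωdvd⟩ := isSuccLimit_iff_omega0_dvd.1 hlim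
  have hlog : log omega0 δ < omega0 := (lt_opow_iff_log_lt one_lt_omega0 hne).1 hδ
  obtain ⟨K, hK⟩ := lt_omega0.1 hlog
  have hPK : ¬ omega0 ^ ((K:Ordinal)+1) ∣ δ := by
    intro hdvd
    have hle := le_of_dvd hne hdvd
    have hlt : δ < omega0 ^ ((K:Ordinal)+1) := by
      have := lt_opow_succ_log_self one_lt_omega0 δ
      rwa [hK, ← Ordinal.add_one_eq_succ] at this
    exact absurd hle (not_le.2 hlt)
  have hexists : ∃ k : ℕ, ¬ omega0 ^ ((k:Ordinal)+1) ∣ δ := ⟨K, hPK⟩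
  set M := Nat.find hexists with hMdef
  have hM : ¬ omega0 ^ ((M:Ordinal)+1) ∣ δ := Nat.find_spec hexists
  have hMpos : 0 < M := by
    rcases Nat.eq_zero_or_pos M with h | h
    · exfalso; apply hM; rw [h]; simpa using hωdvd
    · exact h
  obtain ⟨m, hm⟩ : ∃ m, M = m + 1 := ⟨M - 1, (Nat.succ_pred_eq_of_pos hMpos).symm⟩
  have hmdvd : omega0 ^ ((m:Ordinal)+1) ∣ δ := by
    have hlt : m < M := by omega
    exact not_not.1 (Nat.find_min hexists hlt)
  obtain ⟨q, hq⟩ := hmdvd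
  have hqne : q ≠ 0 := by rintro rfl; simp at hq; exact hne hq
  have hqnotlim : ¬ Order.IsSuccLimit q := by
    intro hql
    obtain ⟨r, hr⟩ := (isSuccLimit_iff_omega0_dvd.1 hql).2
    apply hM
    rw [hm]
    have : δ = omega0 ^ ((m:Ordinal)+1) * omega0 * r := by
      rw [mul_assoc, ← hr, ← hq]
    rw [this]
    have hexp : omega0 ^ (((m+1:ℕ):Ordinal)+1) = omega0 ^ ((m:Ordinal)+1) * omega0 := by
      push_cast
      rw [opow_add, opow_one]
    rw [hexp]
    exact Dvd.dvd.mul_right dvd_rfl r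
  rcases Ordinal.zero_or_succ_or_isSuccLimit q with h0 | ⟨γ, hγ⟩ | hl
  · exact absurd h0 hqne
  · exact ⟨m, γ, by rw [hq, ← hγ, ← Ordinal.add_one_eq_succ]⟩
  · exact absurd hl hqnotlim

lemma sst_eq (m : ℕ) (γ : Ordinal) (n : ℕ) :
    sst (omega0 ^ ((m:Ordinal)+1) * (γ+1)) n =
      omega0 ^ ((m:Ordinal)+1) * γ + omega0 ^ (m:Ordinal) * n := by
  have hex : ∃ p : ℕ × Ordinal, omega0 ^ ((m:Ordinal)+1) * (γ+1)
      = omega0 ^ ((p.1 : Ordinal) + 1) * (p.2 + 1) := ⟨(m,γ), rfl⟩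
  rw [sst, dif_pos hex]
  obtain ⟨h1, h2⟩ := rep_uniq hex.choose_spec
  rw [← h1, ← h2]


/-- The standard system of cofinal sequences `s_st` on the ordinals below
`ω^ω` has the Bachmann property: for all nonzero limit ordinals `β, δ < ω^ω`
and every `n : ℕ`, if `s_st(β,n) < δ ≤ s_st(β,n+1)` then
`s_st(β,n) ≤ s_st(δ,0)`. -/
theorem sst_bachmann (β δ : Ordinal)
    (hβ : β < omega0 ^ omega0) (hδ : δ < omega0 ^ omega0)
    (hβlim : Order.IsSuccLimit β) (hδlim : Order.IsSuccLimit δ) (n : ℕ)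
    (h1 : sst β n < δ) (h2 : δ ≤ sst β (n + 1)) :
    sst β n ≤ sst δ 0 := by
  obtain ⟨m, γ, hβeq⟩ := rep_exists hβ hβlim
  obtain ⟨j, γ', hδeq⟩ := rep_exists hδ hδlim
  subst hβeq hδeq
  rw [sst_eq] at h1 h2 ⊢
  rw [sst_eq]
  simp only [Nat.cast_zero, mul_zero, add_zero]
  set A := omega0 ^ ((m:Ordinal)+1) * γ + omega0 ^ (m:Ordinal) * n with hA
  -- δ < ω^(m+1) * (γ+1)
  have hδlt : omega0 ^ ((j:Ordinal)+1) * (γ'+1) < omega0 ^ ((m:Ordinal)+1) * (γ+1) := by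
    apply lt_of_le_of_lt h2
    have hstep : omega0 ^ (m:Ordinal) * (n+1 : ℕ) < omega0 ^ ((m:Ordinal)+1) := by
      rw [opow_add, opow_one]
      exact (mul_lt_mul_iff_right₀ (opow_pos _ omega0_pos)).2 (nat_lt_omega0 (n+1))
    calc omega0 ^ ((m:Ordinal)+1) * γ + omega0 ^ (m:Ordinal) * (n+1 : ℕ)
        < omega0 ^ ((m:Ordinal)+1) * γ + omega0 ^ ((m:Ordinal)+1) := by
          exact (add_lt_add_iff_left _).2 hstep
      _ = omega0 ^ ((m:Ordinal)+1) * (γ+1) := by rw [mul_add_one]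
  -- ¬ ω^(m+1) ∣ δ
  have hnd : ¬ omega0 ^ ((m:Ordinal)+1) ∣ omega0 ^ ((j:Ordinal)+1) * (γ'+1) := by
    rintro ⟨t, ht⟩
    rw [ht] at hδlt h1
    have htlt : t < γ + 1 := (mul_lt_mul_iff_right₀ (opow_pos _ omega0_pos)).1 hδlt
    have htle : t ≤ γ := Order.lt_succ_iff.1 (by rwa [← Ordinal.add_one_eq_succ])
    have : omega0 ^ ((m:Ordinal)+1) * t ≤ omega0 ^ ((m:Ordinal)+1) * γ :=
      (mul_le_mul_iff_right₀ (opow_pos _ omega0_pos)).2 htle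
    have : omega0 ^ ((m:Ordinal)+1) * t ≤ A := this.trans le_self_add
    exact absurd h1 (not_lt.2 this)
  -- j + 1 ≤ m (in ℕ)
  have hjm : j + 1 ≤ m := by
    by_contra hc
    push_neg at hc
    have hmj : (m:Ordinal) + 1 ≤ (j:Ordinal) + 1 :=
      add_le_add_left (Nat.cast_le.2 (by omega)) 1
    exact hnd ((opow_dvd_opow _ hmj).mul_right _)
  -- ω^(j+1) divides A
  have hjd : omega0 ^ ((j:Ordinal)+1) ∣ A := by
    have hje : ((j:Ordinal)+1) ≤ (m:Ordinal) := by
      have h' : ((j+1 : ℕ) : Ordinal) ≤ (m:Ordinal) := Nat.cast_le.2 hjm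
      push_cast at h'; exact h'
    apply dvd_add
    · exact ((opow_dvd_opow _ (hje.trans le_self_add))).mul_right _
    · exact ((opow_dvd_opow _ hje)).mul_right _
  by_contra hc
  push_neg at hc
  obtain ⟨x, hx⟩ := hjd
  rw [hx] at hc h1
  have : γ' < x := (mul_lt_mul_iff_right₀ (opow_pos _ omega0_pos)).1 hc
  have hxle : γ' + 1 ≤ x := by
    rw [Ordinal.add_one_eq_succ]; exact Order.succ_le_of_lt this
  have : omega0 ^ ((j:Ordinal)+1) * (γ'+1) ≤ omega0 ^ ((j:Ordinal)+1) * x :=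
    (mul_le_mul_iff_right₀ (opow_pos _ omega0_pos)).2 hxle
  exact absurd h1 (not_lt.2 this)
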